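/- For an instance of the one-round data dissemination problem: if at least one admissible tuple of matrices exists, then the minimum total number of transmissions over all valid one-round schemes equals the minimum of Σ_{ℓ∈V} rank(A_ℓ) over all admissible tuples (A_ℓ)_{ℓ∈V}; and if no admissible tuple exists, then no valid one-round scheme exists. -/

import Mathlib

open Matrix

/-- A valid one-round scheme for the data dissemination instance given by the directed
graph `E` on node set `V`, possession sets `P` and request sets `T`: each node `ℓ`
broadcasts the finite set of vectors `S ℓ`, each supported on its possession set, and every
node `ℓ` can decode `x_η` for `η ∈ T ℓ`, i.e. `e_η` lies in the span of the vectors sent by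
its in-neighbors together with `{e_j : j ∈ P ℓ}`. -/
def ValidScheme {F V : Type*} [Field F] {n : ℕ} (E : V → V → Prop)
    (P T : V → Set (Fin n)) (S : V → Finset (Fin n → F)) : Prop :=
  (∀ ℓ, ∀ v ∈ S ℓ, ∀ i, i ∉ P ℓ → v i = 0) ∧
  (∀ ℓ, ∀ η ∈ T ℓ, Pi.single η (1 : F) ∈
    Submodule.span F ((⋃ j ∈ {v | E v ℓ}, (S j : Set (Fin n → F))) ∪
      {v | ∃ j ∈ P ℓ, v = Pi.single j 1}))

/-- An admissible tuple of `n × n` matrices `(A ℓ)_{ℓ ∈ V}`: every entry of `A ℓ` in a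
column outside `P ℓ` is zero, and for every `ℓ` and every `η ∈ T ℓ`, `e_η` lies in the span
of the rows of the matrices `A j` for in-neighbors `j` of `ℓ`, together with
`{e_j : j ∈ P ℓ}`. -/
def AdmissibleTuple {F V : Type*} [Field F] {n : ℕ} (E : V → V → Prop)
    (P T : V → Set (Fin n)) (A : V → Matrix (Fin n) (Fin n) F) : Prop :=
  (∀ ℓ, ∀ i j, j ∉ P ℓ → A ℓ i j = 0) ∧
  (∀ ℓ, ∀ η ∈ T ℓ, Pi.single η (1 : F) ∈
    Submodule.span F ((⋃ j ∈ {v | E v ℓ}, Set.range (A j)) ∪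
      {v | ∃ j ∈ P ℓ, v = Pi.single j 1}))


section Aux

variable {F : Type*} [Field F] {n : ℕ}

/-- The submodule of vectors supported on `P`. -/
def suppSubmodule (F : Type*) [Field F] {n : ℕ} (P : Set (Fin n)) :
    Submodule F (Fin n → F) where
  carrier := {v | ∀ i ∉ P, v i = 0}
  add_mem' := by intro a b ha hb i hi; simp [ha i hi, hb i hi]
  zero_mem' := by intro i hi; rfl
  smul_mem' := by intro c v hv i hi; simp [hv i hi]

lemma span_basis_coe (W : Submodule F (Fin n → F)) (ι : Type*) (b : Module.Basis ι F W) :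
    Submodule.span F (Set.range (fun k => (b k : Fin n → F))) = W := by
  have : (fun k => (b k : Fin n → F)) = W.subtype ∘ b := rfl
  rw [this, Set.range_comp, Submodule.span_image, b.span_eq, Submodule.map_subtype_top]

lemma span_union_congr {V : Type*} (N : Set V) (f g : V → Set (Fin n → F))
    (B : Set (Fin n → F)) (h : ∀ j ∈ N, Submodule.span F (f j) = Submodule.span F (g j)) :
    Submodule.span F ((⋃ j ∈ N, f j) ∪ B) = Submodule.span F ((⋃ j ∈ N, g j) ∪ B) := by
  rw [Submodule.span_union, Submodule.span_union, Submodule.span_iUnion₂,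
    Submodule.span_iUnion₂]
  congr 1
  exact iSup_congr fun j => iSup_congr fun hj => h j hj

lemma exists_tuple_of_scheme {V : Type*} [Fintype V] (E : V → V → Prop)
    (P T : V → Set (Fin n)) (S : V → Finset (Fin n → F)) (hS : ValidScheme E P T S) :
    ∃ A : V → Matrix (Fin n) (Fin n) F, AdmissibleTuple E P T A ∧
      ∑ ℓ, (A ℓ).rank ≤ ∑ ℓ, (S ℓ).card := by
  classical
  set W : V → Submodule F (Fin n → F) := fun ℓ => Submodule.span F (S ℓ : Set (Fin n → F))
    with hW
  have hd : ∀ ℓ, Module.finrank F (W ℓ) ≤ n := fun ℓ => by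
    simpa using (Submodule.finrank_le (W ℓ))
  let b : ∀ ℓ, Module.Basis (Fin (Module.finrank F (W ℓ))) F (W ℓ) :=
    fun ℓ => Module.finBasis F (W ℓ)
  let A : V → Matrix (Fin n) (Fin n) F := fun ℓ => Matrix.of fun i =>
    if h : (i : ℕ) < Module.finrank F (W ℓ) then (b ℓ ⟨i, h⟩ : Fin n → F) else 0
  have hrange : ∀ ℓ, Submodule.span F (Set.range (A ℓ)) = W ℓ := by
    intro ℓ
    apply le_antisymm
    · rw [Submodule.span_le]
      rintro _ ⟨i, rfl⟩
      by_cases h : (i : ℕ) < Module.finrank F (W ℓ)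
      · show (if h : (i : ℕ) < Module.finrank F (W ℓ) then (b ℓ ⟨i, h⟩ : Fin n → F) else 0) ∈ W ℓ
        rw [dif_pos h]
        exact (b ℓ ⟨i, h⟩).2
      · show (if h : (i : ℕ) < Module.finrank F (W ℓ) then (b ℓ ⟨i, h⟩ : Fin n → F) else 0) ∈ W ℓ
        rw [dif_neg h]
        exact (W ℓ).zero_mem
    · rw [← span_basis_coe (W ℓ) _ (b ℓ)]
      apply Submodule.span_mono
      rintro _ ⟨k, rfl⟩
      refine ⟨⟨k, lt_of_lt_of_le k.2 (hd ℓ)⟩, ?_⟩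
      show (if h : ((⟨(k : ℕ), lt_of_lt_of_le k.2 (hd ℓ)⟩ : Fin n) : ℕ) < Module.finrank F (W ℓ)
        then (b ℓ ⟨_, h⟩ : Fin n → F) else 0) = (b ℓ k : Fin n → F)
      rw [dif_pos k.2]
  have hrank : ∀ ℓ, (A ℓ).rank ≤ (S ℓ).card := fun ℓ => by
    rw [Matrix.rank_eq_finrank_span_row]
    change Module.finrank F (Submodule.span F (Set.range (A ℓ))) ≤ _
    rw [hrange ℓ, hW]
    exact finrank_span_finset_le_card (S ℓ)
  refine ⟨A, ⟨?_, ?_⟩, Finset.sum_le_sum fun ℓ _ => hrank ℓ⟩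
  · intro ℓ i j hj
    have hi : A ℓ i ∈ suppSubmodule F (P ℓ) := by
      have hWle : W ℓ ≤ suppSubmodule F (P ℓ) := by
        rw [hW, Submodule.span_le]
        intro v hv i hi
        exact hS.1 ℓ v hv i hi
      have : A ℓ i ∈ W ℓ := by
        rw [← hrange ℓ]; exact Submodule.subset_span ⟨i, rfl⟩
      exact hWle this
    exact hi j hj
  · intro ℓ η hη
    rw [span_union_congr {v | E v ℓ} (fun j => Set.range (A j))
      (fun j => (S j : Set (Fin n → F))) _ (fun j _ => by rw [hrange j])]
    exact hS.2 ℓ η hη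

lemma exists_scheme_of_tuple {V : Type*} [Fintype V] (E : V → V → Prop)
    (P T : V → Set (Fin n)) (A : V → Matrix (Fin n) (Fin n) F)
    (hA : AdmissibleTuple E P T A) :
    ∃ S : V → Finset (Fin n → F), ValidScheme E P T S ∧
      ∑ ℓ, (S ℓ).card ≤ ∑ ℓ, (A ℓ).rank := by
  classical
  set W : V → Submodule F (Fin n → F) := fun ℓ => Submodule.span F (Set.range (A ℓ)) with hW
  let b : ∀ ℓ, Module.Basis (Fin (Module.finrank F (W ℓ))) F (W ℓ) :=
    fun ℓ => Module.finBasis F (W ℓ)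
  let S : V → Finset (Fin n → F) := fun ℓ =>
    Finset.image (fun k => (b ℓ k : Fin n → F)) Finset.univ
  have hcoe : ∀ ℓ, (S ℓ : Set (Fin n → F)) = Set.range (fun k => (b ℓ k : Fin n → F)) := by
    intro ℓ; simp [S]
  have hspan : ∀ ℓ, Submodule.span F (S ℓ : Set (Fin n → F)) = W ℓ := fun ℓ => by
    rw [hcoe ℓ, span_basis_coe]
  have hcard : ∀ ℓ, (S ℓ).card ≤ (A ℓ).rank := by
    intro ℓ
    rw [Matrix.rank_eq_finrank_span_row]
    calc (S ℓ).card ≤ (Finset.univ : Finset (Fin (Module.finrank F (W ℓ)))).card :=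
          Finset.card_image_le
      _ = Module.finrank F (W ℓ) := by simp
      _ = Module.finrank F (Submodule.span F (Set.range (A ℓ))) := rfl
  refine ⟨S, ⟨?_, ?_⟩, Finset.sum_le_sum fun ℓ _ => hcard ℓ⟩
  · intro ℓ v hv i hi
    have hWle : W ℓ ≤ suppSubmodule F (P ℓ) := by
      rw [hW, Submodule.span_le]
      rintro _ ⟨r, rfl⟩ i hi
      exact hA.1 ℓ r i hi
    have : v ∈ W ℓ := by
      rw [← hspan ℓ]; exact Submodule.subset_span hv
    exact hWle this i hi
  · intro ℓ η hη
    rw [span_union_congr {v | E v ℓ} (fun j => (S j : Set (Fin n → F)))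
      (fun j => Set.range (A j)) _ (fun j _ => by rw [hspan j, hW])]
    exact hA.2 ℓ η hη

end Aux

/-- If at least one admissible tuple of matrices exists, then the minimum
total number of transmissions over all valid one-round schemes equals the minimum of
`Σ_{ℓ ∈ V} rank (A ℓ)` over all admissible tuples; and if no admissible tuple exists, then
no valid one-round scheme exists. -/
theorem oneRound_minimum_eq_minrank {F V : Type*} [Field F] [Fintype V] {n : ℕ}
    (E : V → V → Prop) (P T : V → Set (Fin n)) (hT : ∀ ℓ, T ℓ ⊆ (P ℓ)ᶜ) :
    ((∃ A : V → Matrix (Fin n) (Fin n) F, AdmissibleTuple E P T A) →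
      sInf {t : ℕ | ∃ S : V → Finset (Fin n → F),
          ValidScheme E P T S ∧ t = ∑ ℓ, (S ℓ).card}
        = sInf {t : ℕ | ∃ A : V → Matrix (Fin n) (Fin n) F,
            AdmissibleTuple E P T A ∧ t = ∑ ℓ, (A ℓ).rank}) ∧
    ((¬ ∃ A : V → Matrix (Fin n) (Fin n) F, AdmissibleTuple E P T A) →
      ¬ ∃ S : V → Finset (Fin n → F), ValidScheme E P T S) := by
  constructor
  · rintro ⟨A0, hA0⟩
    obtain ⟨S0, hS0, hle0⟩ := exists_scheme_of_tuple E P T A0 hA0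
    have h2ne : {t : ℕ | ∃ A : V → Matrix (Fin n) (Fin n) F,
        AdmissibleTuple E P T A ∧ t = ∑ ℓ, (A ℓ).rank}.Nonempty := ⟨_, A0, hA0, rfl⟩
    have h1ne : {t : ℕ | ∃ S : V → Finset (Fin n → F),
        ValidScheme E P T S ∧ t = ∑ ℓ, (S ℓ).card}.Nonempty := ⟨_, S0, hS0, rfl⟩
    apply le_antisymm
    · obtain ⟨A, hA, ht⟩ := Nat.sInf_mem h2ne
      obtain ⟨S, hS, hle⟩ := exists_scheme_of_tuple E P T A hA
      calc _ ≤ ∑ ℓ, (S ℓ).card := by exact Nat.sInf_le ⟨S, hS, rfl⟩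
        _ ≤ ∑ ℓ, (A ℓ).rank := hle
        _ = _ := ht.symm
    · obtain ⟨S, hS, ht⟩ := Nat.sInf_mem h1ne
      obtain ⟨A, hA, hle⟩ := exists_tuple_of_scheme E P T S hS
      calc _ ≤ ∑ ℓ, (A ℓ).rank := by exact Nat.sInf_le ⟨A, hA, rfl⟩
        _ ≤ ∑ ℓ, (S ℓ).card := hle
        _ = _ := ht.symm
  · rintro hno ⟨S, hS⟩
    obtain ⟨A, hA, -⟩ := exists_tuple_of_scheme E P T S hS
    exact hno ⟨A, hA⟩
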